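/- Let n ≥ 1 and define U: D^n × ℝ^n → ℂ (where D ⊂ ℝ² is the open unit disk) by U(x_1,y_1,…,x_n,y_n,ξ_1,…,ξ_n) = Ψ((x_1+iy_1,…,x_n+iy_n),(e^{iξ_1},…,e^{iξ_n})). Then for every index 1 ≤ j ≤ n and every point of the domain, -((1-x_j²-y_j²)/4)·(∂²U/∂x_j² + ∂²U/∂y_j²) + ∂²U/∂ξ_{j+1}∂ξ_j = 0, where derivatives with respect to ξ_{n+1} are interpreted as 0 (so for j = n the second term is absent). -/

import Mathlib

open Complex Metric

/-- `Ψ` composed over a list of `(w,z)` pairs, applied to `0`: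
`PsiList [(w₁,z₁),…,(wₙ,zₙ)] = Ψ^{w₁}_{z₁} ∘ ⋯ ∘ Ψ^{wₙ}_{zₙ}(0)`, where
`Ψ^{w}_{z}(v) = z(v+w)/(1+conj(w)·v)`. -/
noncomputable def PsiList : List (ℂ × ℂ) → ℂ
  | [] => 0
  | wz :: rest => wz.2 * (PsiList rest + wz.1) / (1 + (starRingEnd ℂ) wz.1 * PsiList rest)

/-- `U(x₁,y₁,…,xₙ,yₙ,ξ₁,…,ξₙ) = Ψ((x₁+iy₁,…,xₙ+iyₙ),(e^{iξ₁},…,e^{iξₙ}))`. -/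
noncomputable def Ufun (n : ℕ) (x y ξ : Fin n → ℝ) : ℂ :=
  PsiList (List.ofFn fun j : Fin n =>
    ((x j : ℂ) + (y j : ℂ) * Complex.I, Complex.exp (Complex.I * (ξ j : ℂ))))

noncomputable def mob (w z v : ℂ) : ℂ := z * (v + w) / (1 + (starRingEnd ℂ) w * v)

noncomputable def appL : List (ℂ × ℂ) → ℂ → ℂ
  | [], v => v
  | p :: l, v => mob p.1 p.2 (appL l v)

lemma psiList_cons (p : ℂ × ℂ) (l : List (ℂ × ℂ)) :
    PsiList (p :: l) = mob p.1 p.2 (PsiList l) := rfl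

lemma psiList_eq_appL (l : List (ℂ × ℂ)) : PsiList l = appL l 0 := by
  induction l with
  | nil => rfl
  | cons p l ih => rw [psiList_cons, appL, ih]

lemma appL_append (l₁ l₂ : List (ℂ × ℂ)) (v : ℂ) :
    appL (l₁ ++ l₂) v = appL l₁ (appL l₂ v) := by
  induction l₁ with
  | nil => rfl
  | cons p l ih => simp [appL, ih]

lemma den_ne {w v : ℂ} (hw : ‖w‖ < 1) (hv : ‖v‖ < 1) :
    1 + (starRingEnd ℂ) w * v ≠ 0 := by
  intro h
  have hc : (starRingEnd ℂ) w * v = -1 := by linear_combination h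
  have h2 : ‖(starRingEnd ℂ) w * v‖ < 1 := by
    rw [norm_mul, RCLike.norm_conj]
    nlinarith [norm_nonneg w, norm_nonneg v]
  rw [hc] at h2; simp at h2

lemma mob_mem {w z v : ℂ} (hw : ‖w‖ < 1) (hz : ‖z‖ = 1) (hv : ‖v‖ < 1) :
    ‖mob w z v‖ < 1 := by
  have hD := den_ne hw hv
  have hw2 : w.re * w.re + w.im * w.im < 1 := by
    have h1 : Complex.normSq w < 1 := by
      rw [← Complex.sq_norm]
      nlinarith [norm_nonneg w]
    rwa [Complex.normSq_apply] at h1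
  have hv2 : v.re * v.re + v.im * v.im < 1 := by
    have h1 : Complex.normSq v < 1 := by
      rw [← Complex.sq_norm]
      nlinarith [norm_nonneg v]
    rwa [Complex.normSq_apply] at h1
  have key : Complex.normSq (v + w) < Complex.normSq (1 + (starRingEnd ℂ) w * v) := by
    simp only [Complex.normSq_apply, Complex.add_re, Complex.add_im, Complex.mul_re,
      Complex.mul_im, Complex.one_re, Complex.one_im, Complex.conj_re, Complex.conj_im]
    nlinarith [mul_pos (by nlinarith : (0:ℝ) < 1 - (v.re*v.re+v.im*v.im))
      (by nlinarith : (0:ℝ) < 1 - (w.re*w.re+w.im*w.im))]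
  have hnorm : ‖v + w‖ < ‖1 + (starRingEnd ℂ) w * v‖ := by
    have := Real.sqrt_lt_sqrt (Complex.normSq_nonneg _) key
    rwa [← Complex.norm_def, ← Complex.norm_def] at this
  rw [mob, norm_div, norm_mul, hz, one_mul,
    div_lt_one (norm_pos_iff.mpr hD)]
  exact hnorm

def GoodL (l : List (ℂ × ℂ)) : Prop := ∀ p ∈ l, ‖p.1‖ < 1 ∧ ‖p.2‖ = 1

lemma appL_mem {l : List (ℂ × ℂ)} (hl : GoodL l) {v : ℂ} (hv : ‖v‖ < 1) :
    ‖appL l v‖ < 1 := by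
  induction l with
  | nil => exact hv
  | cons p l ih =>
      have hp := hl p (List.mem_cons_self)
      exact mob_mem hp.1 hp.2 (ih fun q hq => hl q (List.mem_cons_of_mem _ hq))

lemma psiList_mem {l : List (ℂ × ℂ)} (hl : GoodL l) : ‖PsiList l‖ < 1 := by
  rw [psiList_eq_appL]; exact appL_mem hl (by simp)

lemma appL_diff {l : List (ℂ × ℂ)} (hl : GoodL l) :
    DifferentiableOn ℂ (appL l) (ball (0:ℂ) 1) := by
  induction l with
  | nil => exact differentiableOn_id
  | cons p l ih =>
      have hp := hl p (List.mem_cons_self)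
      have htail : GoodL l := fun q hq => hl q (List.mem_cons_of_mem _ hq)
      have hmob : DifferentiableOn ℂ (fun u => mob p.1 p.2 u) (ball (0:ℂ) 1) := by
        apply DifferentiableOn.div
        · exact (differentiableOn_const _).mul (differentiableOn_id.add (differentiableOn_const _))
        · exact (differentiableOn_const _).add ((differentiableOn_const _).mul differentiableOn_id)
        · intro u hu
          exact den_ne hp.1 (mem_ball_zero_iff.mp hu)
      have : DifferentiableOn ℂ (fun v => mob p.1 p.2 (appL l v)) (ball (0:ℂ) 1) := by
        apply hmob.comp (ih htail)
        intro v hv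
        exact mem_ball_zero_iff.mpr (appL_mem htail (mem_ball_zero_iff.mp hv))
      exact this


lemma hasDerivAt_ofReal' (t : ℝ) : HasDerivAt (fun s : ℝ => (s : ℂ)) 1 t := by
  simpa using (hasDerivAt_id t).ofReal_comp

lemma comp_real {F : ℂ → ℂ} {d g' : ℂ} {g : ℝ → ℂ} {t : ℝ}
    (hF : HasDerivAt F d (g t)) (hg : HasDerivAt g g' t) :
    HasDerivAt (fun s => F (g s)) (d * g') t := by
  have := (hF.hasFDerivAt.restrictScalars ℝ).comp_hasDerivAt t hg
  exact HasDerivAt.comp t hF hg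

lemma F_hasDerivAt {F : ℂ → ℂ} (hF : DifferentiableOn ℂ F (ball (0:ℂ) 1)) {p : ℂ}
    (hp : ‖p‖ < 1) : HasDerivAt F (deriv F p) p :=
  (hF.differentiableAt (isOpen_ball.mem_nhds (mem_ball_zero_iff.mpr hp))).hasDerivAt

lemma derivF_diffOn {F : ℂ → ℂ} (hF : DifferentiableOn ℂ F (ball (0:ℂ) 1)) :
    DifferentiableOn ℂ (deriv F) (ball (0:ℂ) 1) :=
  ((hF.analyticOnNhd isOpen_ball).deriv).differentiableOn

lemma norm_exp_I (r : ℝ) : ‖Complex.exp (Complex.I * (r:ℂ))‖ = 1 := by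
  have : ‖(Complex.exp (Complex.I * (r:ℂ)))‖ = 1 := by
    rw [Complex.norm_exp]; simp
  exact this

lemma conj_real (t c : ℝ) :
    (starRingEnd ℂ) ((t:ℂ) + (c:ℂ) * Complex.I) = (t:ℂ) - (c:ℂ) * Complex.I := by
  simp [Complex.ext_iff]

lemma norm_w_lt {a c : ℝ} (h : a^2 + c^2 < 1) : ‖((a:ℂ) + (c:ℂ) * Complex.I)‖ < 1 := by
  have h1 : ‖((a:ℂ) + (c:ℂ) * Complex.I)‖^2 = a^2 + c^2 := by
    have : ‖((a:ℂ) + (c:ℂ) * Complex.I)‖ ^ 2 = a^2 + c^2 := by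
      rw [Complex.sq_norm, Complex.normSq_add_mul_I]
    exact this
  nlinarith [norm_nonneg ((a:ℂ) + (c:ℂ) * Complex.I)]



-- derivative building block: numerator/denominator for the x-direction
lemma hasDerivAt_gx (z v : ℂ) (c t : ℝ) (hD : 1 + ((t:ℂ) - (c:ℂ)*Complex.I)*v ≠ 0) :
    HasDerivAt (fun s : ℝ => z * (v + ((s:ℂ) + (c:ℂ)*Complex.I)) / (1 + ((s:ℂ) - (c:ℂ)*Complex.I)*v))
      (z * (1 - v^2 - 2*(c:ℂ)*Complex.I*v) / (1 + ((t:ℂ) - (c:ℂ)*Complex.I)*v)^2) t := by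
  have hre := hasDerivAt_ofReal' t
  have hnum : HasDerivAt (fun s : ℝ => z * (v + ((s:ℂ) + (c:ℂ)*Complex.I))) (z * 1) t :=
    ((hre.add_const ((c:ℂ)*Complex.I)).const_add v).const_mul z
  have hden : HasDerivAt (fun s : ℝ => 1 + ((s:ℂ) - (c:ℂ)*Complex.I)*v) (1 * v) t :=
    ((hre.sub_const ((c:ℂ)*Complex.I)).mul_const v).const_add 1
  have := hnum.div hden hD
  refine this.congr_deriv ?_
  field_simp
  ring

lemma hasDerivAt_gx' (z v K : ℂ) (c t : ℝ) (hD : 1 + ((t:ℂ) - (c:ℂ)*Complex.I)*v ≠ 0) :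
    HasDerivAt (fun s : ℝ => z * K / (1 + ((s:ℂ) - (c:ℂ)*Complex.I)*v)^2)
      (-2 * z * K * v / (1 + ((t:ℂ) - (c:ℂ)*Complex.I)*v)^3) t := by
  have hre := hasDerivAt_ofReal' t
  have hden : HasDerivAt (fun s : ℝ => 1 + ((s:ℂ) - (c:ℂ)*Complex.I)*v) (1 * v) t :=
    ((hre.sub_const ((c:ℂ)*Complex.I)).mul_const v).const_add 1
  have hnum : HasDerivAt (fun _ : ℝ => z * K) 0 t := hasDerivAt_const t _
  have key := hnum.div (hden.fun_mul hden) (mul_ne_zero hD hD)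
  have funeq : (fun s : ℝ => z * K / (1 + ((s:ℂ) - (c:ℂ)*Complex.I)*v)^2)
      = fun s : ℝ => z * K / ((1 + ((s:ℂ) - (c:ℂ)*Complex.I)*v) * (1 + ((s:ℂ) - (c:ℂ)*Complex.I)*v)) := by
    funext s; rw [pow_two]
  rw [funeq]
  refine key.congr_deriv ?_
  field_simp
  ring

-- y-direction
lemma hasDerivAt_gy (z v : ℂ) (a t : ℝ) (hD : 1 + ((a:ℂ) - (t:ℂ)*Complex.I)*v ≠ 0) :
    HasDerivAt (fun s : ℝ => z * (v + ((a:ℂ) + (s:ℂ)*Complex.I)) / (1 + ((a:ℂ) - (s:ℂ)*Complex.I)*v))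
      (z * Complex.I * (1 + 2*(a:ℂ)*v + v^2) / (1 + ((a:ℂ) - (t:ℂ)*Complex.I)*v)^2) t := by
  have hre := hasDerivAt_ofReal' t
  have hnum : HasDerivAt (fun s : ℝ => z * (v + ((a:ℂ) + (s:ℂ)*Complex.I)))
      (z * (1 * Complex.I)) t :=
    (((hre.mul_const Complex.I).const_add (a:ℂ)).const_add v).const_mul z
  have hden : HasDerivAt (fun s : ℝ => 1 + ((a:ℂ) - (s:ℂ)*Complex.I)*v)
      (-(1 * Complex.I) * v) t := by
    have h1 : HasDerivAt (fun s : ℝ => (a:ℂ) - (s:ℂ)*Complex.I) (-(1 * Complex.I)) t :=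
      ((hre.mul_const Complex.I).const_sub (a:ℂ))
    exact (h1.mul_const v).const_add 1
  have := hnum.div hden hD
  refine this.congr_deriv ?_
  field_simp
  ring

lemma hasDerivAt_gy' (z v K : ℂ) (a t : ℝ) (hD : 1 + ((a:ℂ) - (t:ℂ)*Complex.I)*v ≠ 0) :
    HasDerivAt (fun s : ℝ => z * Complex.I * K / (1 + ((a:ℂ) - (s:ℂ)*Complex.I)*v)^2)
      (2 * z * Complex.I * K * Complex.I * v / (1 + ((a:ℂ) - (t:ℂ)*Complex.I)*v)^3) t := by
  have hre := hasDerivAt_ofReal' t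
  have hden : HasDerivAt (fun s : ℝ => 1 + ((a:ℂ) - (s:ℂ)*Complex.I)*v)
      (-(1 * Complex.I) * v) t := by
    have h1 : HasDerivAt (fun s : ℝ => (a:ℂ) - (s:ℂ)*Complex.I) (-(1 * Complex.I)) t :=
      ((hre.mul_const Complex.I).const_sub (a:ℂ))
    exact (h1.mul_const v).const_add 1
  have hnum : HasDerivAt (fun _ : ℝ => z * Complex.I * K) 0 t := hasDerivAt_const t _
  have key := hnum.div (hden.fun_mul hden) (mul_ne_zero hD hD)
  have funeq : (fun s : ℝ => z * Complex.I * K / (1 + ((a:ℂ) - (s:ℂ)*Complex.I)*v)^2)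
      = fun s : ℝ => z * Complex.I * K / ((1 + ((a:ℂ) - (s:ℂ)*Complex.I)*v) * (1 + ((a:ℂ) - (s:ℂ)*Complex.I)*v)) := by
    funext s; rw [pow_two]
  rw [funeq]
  refine key.congr_deriv ?_
  field_simp
  ring


lemma key_x (F : ℂ → ℂ) (hF : DifferentiableOn ℂ F (ball (0:ℂ) 1)) (a c : ℝ) (z v : ℂ)
    (hw : ‖((a:ℂ) + (c:ℂ)*I)‖ < 1) (hz : ‖z‖ = 1) (hv : ‖v‖ < 1) :
    iteratedDeriv 2 (fun t : ℝ => F (mob ((t:ℂ) + (c:ℂ)*I) z v)) a =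
      deriv (deriv F) (z * (v + ((a:ℂ)+(c:ℂ)*I)) / (1 + ((a:ℂ)-(c:ℂ)*I)*v)) *
        (z*(1 - v^2 - 2*(c:ℂ)*I*v)/(1 + ((a:ℂ)-(c:ℂ)*I)*v)^2)^2
      + deriv F (z * (v + ((a:ℂ)+(c:ℂ)*I)) / (1 + ((a:ℂ)-(c:ℂ)*I)*v)) *
        (-2*z*(1 - v^2 - 2*(c:ℂ)*I*v)*v/(1 + ((a:ℂ)-(c:ℂ)*I)*v)^3) := by
  have hfun : (fun t : ℝ => F (mob ((t:ℂ) + (c:ℂ)*I) z v))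
      = fun t : ℝ => F (z * (v + ((t:ℂ)+(c:ℂ)*I)) / (1 + ((t:ℂ)-(c:ℂ)*I)*v)) := by
    funext t; rw [mob, conj_real]
  rw [hfun, iteratedDeriv_succ, iteratedDeriv_one]
  have hev : ∀ᶠ t : ℝ in nhds a, ‖((t:ℂ) + (c:ℂ)*I)‖ < 1 := by
    have hcont : Continuous (fun t : ℝ => ‖((t:ℂ) + (c:ℂ)*I)‖) := by continuity
    exact hcont.continuousAt.eventually_lt continuousAt_const hw
  have hder : deriv (fun s : ℝ => F (z * (v + ((s:ℂ)+(c:ℂ)*I)) / (1 + ((s:ℂ)-(c:ℂ)*I)*v)))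
      =ᶠ[nhds a] fun t : ℝ => deriv F (z * (v + ((t:ℂ)+(c:ℂ)*I)) / (1 + ((t:ℂ)-(c:ℂ)*I)*v))
        * (z * (1 - v^2 - 2*(c:ℂ)*I*v) / (1 + ((t:ℂ)-(c:ℂ)*I)*v)^2) := by
    filter_upwards [hev] with t ht
    have hDt : 1 + ((t:ℂ)-(c:ℂ)*I)*v ≠ 0 := by
      have := den_ne ht hv; rwa [conj_real] at this
    have hmem : ‖z * (v + ((t:ℂ)+(c:ℂ)*I)) / (1 + ((t:ℂ)-(c:ℂ)*I)*v)‖ < 1 := by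
      have := mob_mem ht hz hv; rwa [mob, conj_real] at this
    exact (comp_real (g := fun s : ℝ => z * (v + ((s:ℂ)+(c:ℂ)*I)) / (1 + ((s:ℂ)-(c:ℂ)*I)*v)) (F_hasDerivAt hF hmem) (hasDerivAt_gx z v c t hDt)).deriv
  rw [hder.deriv_eq]
  have hDa : 1 + ((a:ℂ)-(c:ℂ)*I)*v ≠ 0 := by
    have := den_ne hw hv; rwa [conj_real] at this
  have hmema : ‖z * (v + ((a:ℂ)+(c:ℂ)*I)) / (1 + ((a:ℂ)-(c:ℂ)*I)*v)‖ < 1 := by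
    have := mob_mem hw hz hv; rwa [mob, conj_real] at this
  have h1 : HasDerivAt (fun t : ℝ => deriv F (z * (v + ((t:ℂ)+(c:ℂ)*I)) / (1 + ((t:ℂ)-(c:ℂ)*I)*v)))
      (deriv (deriv F) (z * (v + ((a:ℂ)+(c:ℂ)*I)) / (1 + ((a:ℂ)-(c:ℂ)*I)*v))
        * (z * (1 - v^2 - 2*(c:ℂ)*I*v) / (1 + ((a:ℂ)-(c:ℂ)*I)*v)^2)) a :=
    comp_real (g := fun s : ℝ => z * (v + ((s:ℂ)+(c:ℂ)*I)) / (1 + ((s:ℂ)-(c:ℂ)*I)*v)) (F_hasDerivAt (derivF_diffOn hF) hmema) (hasDerivAt_gx z v c a hDa)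
  have h2 := hasDerivAt_gx' z v (1 - v^2 - 2*(c:ℂ)*I*v) c a hDa
  rw [(h1.fun_mul h2).deriv]
  ring

lemma key_y (F : ℂ → ℂ) (hF : DifferentiableOn ℂ F (ball (0:ℂ) 1)) (a c : ℝ) (z v : ℂ)
    (hw : ‖((a:ℂ) + (c:ℂ)*I)‖ < 1) (hz : ‖z‖ = 1) (hv : ‖v‖ < 1) :
    iteratedDeriv 2 (fun t : ℝ => F (mob ((a:ℂ) + (t:ℂ)*I) z v)) c =
      deriv (deriv F) (z * (v + ((a:ℂ)+(c:ℂ)*I)) / (1 + ((a:ℂ)-(c:ℂ)*I)*v)) *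
        (z*I*(1 + 2*(a:ℂ)*v + v^2)/(1 + ((a:ℂ)-(c:ℂ)*I)*v)^2)^2
      + deriv F (z * (v + ((a:ℂ)+(c:ℂ)*I)) / (1 + ((a:ℂ)-(c:ℂ)*I)*v)) *
        (2*z*I*(1 + 2*(a:ℂ)*v + v^2)*I*v/(1 + ((a:ℂ)-(c:ℂ)*I)*v)^3) := by
  have hfun : (fun t : ℝ => F (mob ((a:ℂ) + (t:ℂ)*I) z v))
      = fun t : ℝ => F (z * (v + ((a:ℂ)+(t:ℂ)*I)) / (1 + ((a:ℂ)-(t:ℂ)*I)*v)) := by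
    funext t; rw [mob, conj_real]
  rw [hfun, iteratedDeriv_succ, iteratedDeriv_one]
  have hev : ∀ᶠ t : ℝ in nhds c, ‖((a:ℂ) + (t:ℂ)*I)‖ < 1 := by
    have hcont : Continuous (fun t : ℝ => ‖((a:ℂ) + (t:ℂ)*I)‖) := by continuity
    exact hcont.continuousAt.eventually_lt continuousAt_const hw
  have hder : deriv (fun s : ℝ => F (z * (v + ((a:ℂ)+(s:ℂ)*I)) / (1 + ((a:ℂ)-(s:ℂ)*I)*v)))
      =ᶠ[nhds c] fun t : ℝ => deriv F (z * (v + ((a:ℂ)+(t:ℂ)*I)) / (1 + ((a:ℂ)-(t:ℂ)*I)*v))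
        * (z * I * (1 + 2*(a:ℂ)*v + v^2) / (1 + ((a:ℂ)-(t:ℂ)*I)*v)^2) := by
    filter_upwards [hev] with t ht
    have hDt : 1 + ((a:ℂ)-(t:ℂ)*I)*v ≠ 0 := by
      have := den_ne ht hv; rwa [conj_real] at this
    have hmem : ‖z * (v + ((a:ℂ)+(t:ℂ)*I)) / (1 + ((a:ℂ)-(t:ℂ)*I)*v)‖ < 1 := by
      have := mob_mem ht hz hv; rwa [mob, conj_real] at this
    exact (comp_real (g := fun s : ℝ => z * (v + ((a:ℂ)+(s:ℂ)*I)) / (1 + ((a:ℂ)-(s:ℂ)*I)*v)) (F_hasDerivAt hF hmem) (hasDerivAt_gy z v a t hDt)).deriv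
  rw [hder.deriv_eq]
  have hDa : 1 + ((a:ℂ)-(c:ℂ)*I)*v ≠ 0 := by
    have := den_ne hw hv; rwa [conj_real] at this
  have hmema : ‖z * (v + ((a:ℂ)+(c:ℂ)*I)) / (1 + ((a:ℂ)-(c:ℂ)*I)*v)‖ < 1 := by
    have := mob_mem hw hz hv; rwa [mob, conj_real] at this
  have h1 : HasDerivAt (fun t : ℝ => deriv F (z * (v + ((a:ℂ)+(t:ℂ)*I)) / (1 + ((a:ℂ)-(t:ℂ)*I)*v)))
      (deriv (deriv F) (z * (v + ((a:ℂ)+(c:ℂ)*I)) / (1 + ((a:ℂ)-(c:ℂ)*I)*v))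
        * (z * I * (1 + 2*(a:ℂ)*v + v^2) / (1 + ((a:ℂ)-(c:ℂ)*I)*v)^2)) c :=
    comp_real (g := fun s : ℝ => z * (v + ((a:ℂ)+(s:ℂ)*I)) / (1 + ((a:ℂ)-(s:ℂ)*I)*v)) (F_hasDerivAt (derivF_diffOn hF) hmema) (hasDerivAt_gy z v a c hDa)
  have h2 := hasDerivAt_gy' z v (1 + 2*(a:ℂ)*v + v^2) a c hDa
  rw [(h1.fun_mul h2).deriv]
  ring


lemma key_mix (F : ℂ → ℂ) (hF : DifferentiableOn ℂ F (ball (0:ℂ) 1)) (a c a' c' ξ₁ ξ₂ : ℝ)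
    (v₂ : ℂ) (hw : ‖((a:ℂ)+(c:ℂ)*I)‖ < 1) (hw' : ‖((a':ℂ)+(c':ℂ)*I)‖ < 1) (hv₂ : ‖v₂‖ < 1) :
    deriv (fun s : ℝ => deriv (fun t : ℝ =>
        F (mob ((a:ℂ)+(c:ℂ)*I) (Complex.exp (I*(t:ℂ)))
            (mob ((a':ℂ)+(c':ℂ)*I) (Complex.exp (I*(s:ℂ))) v₂))) ξ₁) ξ₂
    = deriv (deriv F) (Complex.exp (I*(ξ₁:ℂ)) * (mob ((a':ℂ)+(c':ℂ)*I) (Complex.exp (I*(ξ₂:ℂ))) v₂ + ((a:ℂ)+(c:ℂ)*I))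
          / (1 + ((a:ℂ)-(c:ℂ)*I) * mob ((a':ℂ)+(c':ℂ)*I) (Complex.exp (I*(ξ₂:ℂ))) v₂))
        * (Complex.exp (I*(ξ₁:ℂ)) * I * mob ((a':ℂ)+(c':ℂ)*I) (Complex.exp (I*(ξ₂:ℂ))) v₂
            * (1 - ((a:ℂ)-(c:ℂ)*I)*((a:ℂ)+(c:ℂ)*I))
          / (1 + ((a:ℂ)-(c:ℂ)*I) * mob ((a':ℂ)+(c':ℂ)*I) (Complex.exp (I*(ξ₂:ℂ))) v₂)^2)
        * (I * (Complex.exp (I*(ξ₁:ℂ)) * (mob ((a':ℂ)+(c':ℂ)*I) (Complex.exp (I*(ξ₂:ℂ))) v₂ + ((a:ℂ)+(c:ℂ)*I))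
          / (1 + ((a:ℂ)-(c:ℂ)*I) * mob ((a':ℂ)+(c':ℂ)*I) (Complex.exp (I*(ξ₂:ℂ))) v₂)))
      + deriv F (Complex.exp (I*(ξ₁:ℂ)) * (mob ((a':ℂ)+(c':ℂ)*I) (Complex.exp (I*(ξ₂:ℂ))) v₂ + ((a:ℂ)+(c:ℂ)*I))
          / (1 + ((a:ℂ)-(c:ℂ)*I) * mob ((a':ℂ)+(c':ℂ)*I) (Complex.exp (I*(ξ₂:ℂ))) v₂))
        * (I * (Complex.exp (I*(ξ₁:ℂ)) * I * mob ((a':ℂ)+(c':ℂ)*I) (Complex.exp (I*(ξ₂:ℂ))) v₂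
            * (1 - ((a:ℂ)-(c:ℂ)*I)*((a:ℂ)+(c:ℂ)*I))
          / (1 + ((a:ℂ)-(c:ℂ)*I) * mob ((a':ℂ)+(c':ℂ)*I) (Complex.exp (I*(ξ₂:ℂ))) v₂)^2)) := by
  have hVs : ∀ s : ℝ, ‖mob ((a':ℂ)+(c':ℂ)*I) (Complex.exp (I*(s:ℂ))) v₂‖ < 1 :=
    fun s => mob_mem hw' (norm_exp_I s) hv₂
  have hinner : (fun s : ℝ => deriv (fun t : ℝ =>
        F (mob ((a:ℂ)+(c:ℂ)*I) (Complex.exp (I*(t:ℂ)))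
            (mob ((a':ℂ)+(c':ℂ)*I) (Complex.exp (I*(s:ℂ))) v₂))) ξ₁)
      = fun s : ℝ =>
          deriv F (Complex.exp (I*(ξ₁:ℂ)) * (mob ((a':ℂ)+(c':ℂ)*I) (Complex.exp (I*(s:ℂ))) v₂ + ((a:ℂ)+(c:ℂ)*I))
              / (1 + ((a:ℂ)-(c:ℂ)*I) * mob ((a':ℂ)+(c':ℂ)*I) (Complex.exp (I*(s:ℂ))) v₂))
          * (I * (Complex.exp (I*(ξ₁:ℂ)) * (mob ((a':ℂ)+(c':ℂ)*I) (Complex.exp (I*(s:ℂ))) v₂ + ((a:ℂ)+(c:ℂ)*I))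
              / (1 + ((a:ℂ)-(c:ℂ)*I) * mob ((a':ℂ)+(c':ℂ)*I) (Complex.exp (I*(s:ℂ))) v₂))) := by
    funext s
    set V : ℂ := mob ((a':ℂ)+(c':ℂ)*I) (Complex.exp (I*(s:ℂ))) v₂ with hV
    have hVb : ‖V‖ < 1 := hVs s
    have hDen : 1 + ((a:ℂ)-(c:ℂ)*I) * V ≠ 0 := by
      have := den_ne hw hVb; rwa [conj_real] at this
    have hfun2 : (fun t : ℝ => F (mob ((a:ℂ)+(c:ℂ)*I) (Complex.exp (I*(t:ℂ))) V))
        = fun t : ℝ => F (Complex.exp (I*(t:ℂ)) * ((V + ((a:ℂ)+(c:ℂ)*I))/(1 + ((a:ℂ)-(c:ℂ)*I)*V))) := by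
      funext t; rw [mob, conj_real, mul_div_assoc]
    rw [hfun2]
    have hexp : HasDerivAt (fun t : ℝ => Complex.exp (I*(t:ℂ))) (Complex.exp (I*(ξ₁:ℂ)) * (I*1)) ξ₁ :=
      ((hasDerivAt_ofReal' ξ₁).const_mul I).cexp
    have hg := hexp.mul_const ((V + ((a:ℂ)+(c:ℂ)*I))/(1 + ((a:ℂ)-(c:ℂ)*I)*V))
    have hmem : ‖Complex.exp (I*(ξ₁:ℂ)) * ((V + ((a:ℂ)+(c:ℂ)*I))/(1 + ((a:ℂ)-(c:ℂ)*I)*V))‖ < 1 := by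
      have := mob_mem hw (norm_exp_I ξ₁) hVb
      rwa [mob, conj_real, mul_div_assoc] at this
    have hd := (comp_real
      (g := fun t : ℝ => Complex.exp (I*(t:ℂ)) * ((V + ((a:ℂ)+(c:ℂ)*I))/(1 + ((a:ℂ)-(c:ℂ)*I)*V)))
      (F_hasDerivAt hF hmem) hg).deriv
    rw [hd, mul_div_assoc]
    ring
  rw [hinner]
  set W : ℂ := (a:ℂ)+(c:ℂ)*I with hW
  set Wb : ℂ := (a:ℂ)-(c:ℂ)*I with hWb
  set v : ℂ := mob ((a':ℂ)+(c':ℂ)*I) (Complex.exp (I*(ξ₂:ℂ))) v₂ with hv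
  have hvb : ‖v‖ < 1 := hVs ξ₂
  have hD : 1 + Wb * v ≠ 0 := by
    have := den_ne hw hvb; rwa [conj_real] at this
  have hexp2 : HasDerivAt (fun s : ℝ => Complex.exp (I*(s:ℂ))) (Complex.exp (I*(ξ₂:ℂ)) * (I*1)) ξ₂ :=
    ((hasDerivAt_ofReal' ξ₂).const_mul I).cexp
  have hVfun : (fun s : ℝ => mob ((a':ℂ)+(c':ℂ)*I) (Complex.exp (I*(s:ℂ))) v₂)
      = fun s : ℝ => Complex.exp (I*(s:ℂ)) * ((v₂ + ((a':ℂ)+(c':ℂ)*I))/(1 + ((a':ℂ)-(c':ℂ)*I)*v₂)) := by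
    funext s; rw [mob, conj_real, mul_div_assoc]
  have hVder : HasDerivAt (fun s : ℝ => mob ((a':ℂ)+(c':ℂ)*I) (Complex.exp (I*(s:ℂ))) v₂) (I * v) ξ₂ := by
    rw [hVfun]
    have := hexp2.mul_const ((v₂ + ((a':ℂ)+(c':ℂ)*I))/(1 + ((a':ℂ)-(c':ℂ)*I)*v₂))
    refine this.congr_deriv ?_
    rw [hv, mob, conj_real, mul_div_assoc]; ring
  have hP : HasDerivAt (fun s : ℝ =>
        Complex.exp (I*(ξ₁:ℂ)) * (mob ((a':ℂ)+(c':ℂ)*I) (Complex.exp (I*(s:ℂ))) v₂ + W)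
          / (1 + Wb * mob ((a':ℂ)+(c':ℂ)*I) (Complex.exp (I*(s:ℂ))) v₂))
      (Complex.exp (I*(ξ₁:ℂ)) * I * v * (1 - Wb*W) / (1 + Wb*v)^2) ξ₂ := by
    have hnum : HasDerivAt (fun s : ℝ =>
          Complex.exp (I*(ξ₁:ℂ)) * (mob ((a':ℂ)+(c':ℂ)*I) (Complex.exp (I*(s:ℂ))) v₂ + W))
        (Complex.exp (I*(ξ₁:ℂ)) * (I*v)) ξ₂ := (hVder.add_const W).const_mul _
    have hden : HasDerivAt (fun s : ℝ =>
          1 + Wb * mob ((a':ℂ)+(c':ℂ)*I) (Complex.exp (I*(s:ℂ))) v₂)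
        (Wb * (I*v)) ξ₂ := (hVder.const_mul Wb).const_add 1
    have := hnum.div hden hD
    rw [← hv] at this
    refine this.congr_deriv ?_
    field_simp
    ring
  have hmem2 : ‖Complex.exp (I*(ξ₁:ℂ)) * (v + W) / (1 + Wb*v)‖ < 1 := by
    have := mob_mem hw (norm_exp_I ξ₁) hvb
    rwa [mob, conj_real] at this
  have h1 : HasDerivAt (fun s : ℝ => deriv F
        (Complex.exp (I*(ξ₁:ℂ)) * (mob ((a':ℂ)+(c':ℂ)*I) (Complex.exp (I*(s:ℂ))) v₂ + W)
          / (1 + Wb * mob ((a':ℂ)+(c':ℂ)*I) (Complex.exp (I*(s:ℂ))) v₂)))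
      (deriv (deriv F) (Complex.exp (I*(ξ₁:ℂ)) * (v + W) / (1 + Wb*v))
        * (Complex.exp (I*(ξ₁:ℂ)) * I * v * (1 - Wb*W) / (1 + Wb*v)^2)) ξ₂ :=
    comp_real (g := fun s : ℝ =>
        Complex.exp (I*(ξ₁:ℂ)) * (mob ((a':ℂ)+(c':ℂ)*I) (Complex.exp (I*(s:ℂ))) v₂ + W)
          / (1 + Wb * mob ((a':ℂ)+(c':ℂ)*I) (Complex.exp (I*(s:ℂ))) v₂))
      (F_hasDerivAt (derivF_diffOn hF) hmem2) hP
  have h2 := hP.const_mul I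
  rw [(h1.fun_mul h2).deriv]



lemma alg_xy (F₁ F₂ z v a c D : ℂ) :
    F₂ * (z*(1 - v^2 - 2*c*I*v)/D^2)^2 + F₁ * (-2*z*(1 - v^2 - 2*c*I*v)*v/D^3)
    + (F₂ * (z*I*(1 + 2*a*v + v^2)/D^2)^2 + F₁ * (2*z*I*(1 + 2*a*v + v^2)*I*v/D^3))
    = F₂ * (z^2*((1 - v^2 - 2*c*I*v)^2 - (1 + 2*a*v + v^2)^2)/D^4)
      + F₁ * (-2*z*v*((1 - v^2 - 2*c*I*v) + (1 + 2*a*v + v^2))/D^3) := by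
  linear_combination (F₂*z^2*(1+2*a*v+v^2)^2/D^4 + 2*F₁*z*(1+2*a*v+v^2)*v/D^3) * Complex.I_sq

lemma alg_main (F₁ F₂ z v a c D : ℂ) (hDdef : D = 1 + (a - c*I)*v) (hD : D ≠ 0) :
    -((1 - (a+c*I)*(a-c*I))/4) *
      (F₂ * (z*(1 - v^2 - 2*c*I*v)/D^2)^2
        + F₁ * (-2*z*(1 - v^2 - 2*c*I*v)*v/D^3)
       + (F₂ * (z*I*(1 + 2*a*v + v^2)/D^2)^2
        + F₁ * (2*z*I*(1 + 2*a*v + v^2)*I*v/D^3)))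
    + (F₂ * (z*I*v*(1-(a-c*I)*(a+c*I))/D^2) * (I*(z*(v+(a+c*I))/D))
       + F₁ * (I*(z*I*v*(1-(a-c*I)*(a+c*I))/D^2))) = 0 := by
  rw [alg_xy F₁ F₂ z v a c D]
  have e2 : F₂ * (z*I*v*(1-(a-c*I)*(a+c*I))/D^2) * (I*(z*(v+(a+c*I))/D))
       + F₁ * (I*(z*I*v*(1-(a-c*I)*(a+c*I))/D^2))
      = -(F₂*z^2*v*(1-(a-c*I)*(a+c*I))*(v+(a+c*I))/D^3)
        - F₁*z*v*(1-(a-c*I)*(a+c*I))/D^2 := by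
    linear_combination (F₂*z^2*v*(1-(a-c*I)*(a+c*I))*(v+(a+c*I))/D^3
      + F₁*z*v*(1-(a-c*I)*(a+c*I))/D^2) * Complex.I_sq
  rw [e2]
  field_simp
  rw [hDdef]
  ring

lemma psi_decomp {n : ℕ} (f : Fin n → ℂ × ℂ) (j : ℕ) (hj : j < n) :
    PsiList (List.ofFn f) = appL ((List.ofFn f).take j)
      (mob (f ⟨j, hj⟩).1 (f ⟨j, hj⟩).2 (PsiList ((List.ofFn f).drop (j+1)))) := by
  have hlen : j < (List.ofFn f).length := by simp [hj]
  conv_lhs => rw [← List.take_append_drop j (List.ofFn f)]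
  rw [psiList_eq_appL, appL_append, ← psiList_eq_appL]
  rw [List.drop_eq_getElem_cons hlen, psiList_cons]
  congr 1
  simp [List.getElem_ofFn]

lemma take_ofFn_congr {n : ℕ} {α : Type*} {f g : Fin n → α} (j : ℕ)
    (h : ∀ k : Fin n, (k : ℕ) < j → f k = g k) :
    (List.ofFn f).take j = (List.ofFn g).take j := by
  apply List.ext_getElem (by simp)
  intro i h1 h2
  have hij : i < j := lt_of_lt_of_le h1 (List.length_take_le _ _)
  simp only [List.getElem_take, List.getElem_ofFn]
  exact h _ hij

lemma drop_ofFn_congr {n : ℕ} {α : Type*} {f g : Fin n → α} (j : ℕ)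
    (h : ∀ k : Fin n, j ≤ (k : ℕ) → f k = g k) :
    (List.ofFn f).drop j = (List.ofFn g).drop j := by
  apply List.ext_getElem (by simp)
  intro i h1 h2
  simp only [List.getElem_drop, List.getElem_ofFn]
  refine h _ ?_
  simp

lemma psi_drop_decomp {n : ℕ} (f : Fin n → ℂ × ℂ) (j : ℕ) (hj : j < n) :
    PsiList ((List.ofFn f).drop j)
      = mob (f ⟨j, hj⟩).1 (f ⟨j, hj⟩).2 (PsiList ((List.ofFn f).drop (j+1))) := by
  have hlen : j < (List.ofFn f).length := by simp [hj]
  rw [List.drop_eq_getElem_cons hlen, psiList_cons]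
  congr 1 <;> simp [List.getElem_ofFn]

theorem statement13 (n : ℕ) (hn : 1 ≤ n) (x y ξ : Fin n → ℝ)
    (hxy : ∀ j, (x j) ^ 2 + (y j) ^ 2 < 1) (j : Fin n) :
    -(((1 - (x j) ^ 2 - (y j) ^ 2) / 4 : ℝ) : ℂ) *
        (iteratedDeriv 2 (fun t : ℝ => Ufun n (Function.update x j t) y ξ) (x j) +
         iteratedDeriv 2 (fun t : ℝ => Ufun n x (Function.update y j t) ξ) (y j)) +
      (if h : (j : ℕ) + 1 < n then
          deriv (fun s : ℝ =>
              deriv (fun t : ℝ =>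
                  Ufun n x y (Function.update (Function.update ξ ⟨(j : ℕ) + 1, h⟩ s) j t))
                (ξ j))
            (ξ ⟨(j : ℕ) + 1, h⟩)
        else 0) = 0 := by
  classical
  set L : List (ℂ × ℂ) := List.ofFn (fun k : Fin n =>
      ((x k : ℂ) + (y k : ℂ) * Complex.I, Complex.exp (Complex.I * (ξ k : ℂ)))) with hLdef
  have hgood : GoodL L := by
    intro p hp
    rw [hLdef, List.mem_ofFn] at hp
    obtain ⟨k, rfl⟩ := hp
    exact ⟨norm_w_lt (hxy k), norm_exp_I _⟩
  set F : ℂ → ℂ := appL (L.take (j:ℕ)) with hFdef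
  set v : ℂ := PsiList (L.drop ((j:ℕ)+1)) with hvdef
  have hgA : GoodL (L.take (j:ℕ)) := fun p hp => hgood p (List.mem_of_mem_take hp)
  have hFdiff : DifferentiableOn ℂ F (ball (0:ℂ) 1) := appL_diff hgA
  have hvlt : ‖v‖ < 1 := by
    rw [hvdef]; exact psiList_mem (fun p hp => hgood p (List.mem_of_mem_drop hp))
  have hwj : ‖((x j : ℂ) + ((y j : ℝ):ℂ) * I)‖ < 1 := norm_w_lt (hxy j)
  have hzj : ‖Complex.exp (I * ((ξ j : ℝ) : ℂ))‖ = 1 := norm_exp_I _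
  -- decomposition of the x-direction function
  have hx_fun : (fun t : ℝ => Ufun n (Function.update x j t) y ξ)
      = fun t : ℝ => F (mob ((t:ℂ) + ((y j : ℝ):ℂ)*I) (Complex.exp (I * ((ξ j : ℝ):ℂ))) v) := by
    funext t
    show PsiList (List.ofFn fun k : Fin n =>
        ((Function.update x j t k : ℂ) + (y k : ℂ) * Complex.I,
          Complex.exp (Complex.I * (ξ k : ℂ)))) = _
    rw [psi_decomp _ (j:ℕ) j.isLt]
    have e1 : (List.ofFn fun k : Fin n =>
        ((Function.update x j t k : ℂ) + (y k : ℂ) * Complex.I,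
          Complex.exp (Complex.I * (ξ k : ℂ)))).take (j:ℕ) = L.take (j:ℕ) := by
      rw [hLdef]
      apply take_ofFn_congr
      intro k hk
      have hkj : k ≠ j := by
        intro hh; rw [hh] at hk; exact absurd hk (lt_irrefl _)
      rw [Function.update_of_ne hkj]
    have e2 : (List.ofFn fun k : Fin n =>
        ((Function.update x j t k : ℂ) + (y k : ℂ) * Complex.I,
          Complex.exp (Complex.I * (ξ k : ℂ)))).drop ((j:ℕ)+1) = L.drop ((j:ℕ)+1) := by
      rw [hLdef]
      apply drop_ofFn_congr
      intro k hk
      have hkj : k ≠ j := by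
        intro hh; rw [hh] at hk; omega
      rw [Function.update_of_ne hkj]
    rw [e1, e2, ← hvdef, ← hFdef]
    simp [Function.update_self]
  -- decomposition of the y-direction function
  have hy_fun : (fun t : ℝ => Ufun n x (Function.update y j t) ξ)
      = fun t : ℝ => F (mob (((x j : ℝ):ℂ) + (t:ℂ)*I) (Complex.exp (I * ((ξ j : ℝ):ℂ))) v) := by
    funext t
    show PsiList (List.ofFn fun k : Fin n =>
        ((x k : ℂ) + (Function.update y j t k : ℂ) * Complex.I,
          Complex.exp (Complex.I * (ξ k : ℂ)))) = _
    rw [psi_decomp _ (j:ℕ) j.isLt]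
    have e1 : (List.ofFn fun k : Fin n =>
        ((x k : ℂ) + (Function.update y j t k : ℂ) * Complex.I,
          Complex.exp (Complex.I * (ξ k : ℂ)))).take (j:ℕ) = L.take (j:ℕ) := by
      rw [hLdef]
      apply take_ofFn_congr
      intro k hk
      have hkj : k ≠ j := by
        intro hh; rw [hh] at hk; exact absurd hk (lt_irrefl _)
      rw [Function.update_of_ne hkj]
    have e2 : (List.ofFn fun k : Fin n =>
        ((x k : ℂ) + (Function.update y j t k : ℂ) * Complex.I,
          Complex.exp (Complex.I * (ξ k : ℂ)))).drop ((j:ℕ)+1) = L.drop ((j:ℕ)+1) := by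
      rw [hLdef]
      apply drop_ofFn_congr
      intro k hk
      have hkj : k ≠ j := by
        intro hh; rw [hh] at hk; omega
      rw [Function.update_of_ne hkj]
    rw [e1, e2, ← hvdef, ← hFdef]
    simp [Function.update_self]
  rw [hx_fun, hy_fun,
    key_x F hFdiff (x j) (y j) (Complex.exp (I * ((ξ j : ℝ):ℂ))) v hwj hzj hvlt,
    key_y F hFdiff (x j) (y j) (Complex.exp (I * ((ξ j : ℝ):ℂ))) v hwj hzj hvlt]
  have hD : (1 + (((x j : ℝ):ℂ) - ((y j : ℝ):ℂ)*I) * v) ≠ 0 := by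
    have := den_ne hwj hvlt; rwa [conj_real] at this
  split_ifs with h
  · -- case j+1 < n
    set j' : Fin n := ⟨(j:ℕ)+1, h⟩ with hj'def
    set v₂ : ℂ := PsiList (L.drop ((j:ℕ)+2)) with hv2def
    have hv2lt : ‖v₂‖ < 1 := by
      rw [hv2def]; exact psiList_mem (fun p hp => hgood p (List.mem_of_mem_drop hp))
    have hwj' : ‖((x j' : ℂ) + ((y j' : ℝ):ℂ) * I)‖ < 1 := norm_w_lt (hxy j')
    have hveq : v = mob (((x j' : ℝ):ℂ) + ((y j' : ℝ):ℂ)*I)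
        (Complex.exp (I * ((ξ j' : ℝ):ℂ))) v₂ := by
      rw [hvdef, hLdef, psi_drop_decomp _ ((j:ℕ)+1) h]
    have hmix_fun : (fun s : ℝ => deriv (fun t : ℝ =>
          Ufun n x y (Function.update (Function.update ξ j' s) j t)) (ξ j))
        = fun s : ℝ => deriv (fun t : ℝ =>
            F (mob (((x j : ℝ):ℂ) + ((y j : ℝ):ℂ)*I) (Complex.exp (I * (t:ℂ)))
               (mob (((x j' : ℝ):ℂ) + ((y j' : ℝ):ℂ)*I) (Complex.exp (I * (s:ℂ))) v₂))) (ξ j) := by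
      funext s
      congr 1
      funext t
      show PsiList (List.ofFn fun k : Fin n =>
          ((x k : ℂ) + (y k : ℂ) * Complex.I,
            Complex.exp (Complex.I * (Function.update (Function.update ξ j' s) j t k : ℂ)))) = _
      rw [psi_decomp _ (j:ℕ) j.isLt]
      have e1 : (List.ofFn fun k : Fin n =>
          ((x k : ℂ) + (y k : ℂ) * Complex.I,
            Complex.exp (Complex.I * (Function.update (Function.update ξ j' s) j t k : ℂ)))).take (j:ℕ)
          = L.take (j:ℕ) := by
        rw [hLdef]
        apply take_ofFn_congr
        intro k hk
        have hkj : k ≠ j := by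
          intro hh; rw [hh] at hk; exact absurd hk (lt_irrefl _)
        have hkj' : k ≠ j' := by
          intro hh; rw [hh] at hk; simp [hj'def] at hk
        rw [Function.update_of_ne hkj, Function.update_of_ne hkj']
      rw [e1]
      rw [psi_drop_decomp _ ((j:ℕ)+1) h]
      have e2 : (List.ofFn fun k : Fin n =>
          ((x k : ℂ) + (y k : ℂ) * Complex.I,
            Complex.exp (Complex.I * (Function.update (Function.update ξ j' s) j t k : ℂ)))).drop ((j:ℕ)+2)
          = L.drop ((j:ℕ)+2) := by
        rw [hLdef]
        apply drop_ofFn_congr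
        intro k hk
        have hkj : k ≠ j := by
          intro hh; rw [hh] at hk; omega
        have hkj' : k ≠ j' := by
          intro hh; rw [hh] at hk; simp [hj'def] at hk
        rw [Function.update_of_ne hkj, Function.update_of_ne hkj']
      rw [e2, ← hv2def, ← hFdef]
      have hjj' : j ≠ j' := by
        intro hh
        have : (j:ℕ) = (j':ℕ) := by rw [hh]
        simp [hj'def] at this
      have hval_j : Function.update (Function.update ξ j' s) j t j = t :=
        Function.update_self _ _ _
      have hval_j' : Function.update (Function.update ξ j' s) j t j' = s := by
        rw [Function.update_of_ne (Ne.symm hjj'), Function.update_self]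
      rw [← hj'def]; simp [hval_j, hval_j', hjj']
    rw [hmix_fun,
      key_mix F hFdiff (x j) (y j) (x j') (y j') (ξ j) (ξ j') v₂ hwj hwj' hv2lt,
      ← hveq]
    have hcast : (((1 - (x j) ^ 2 - (y j) ^ 2) / 4 : ℝ) : ℂ)
        = (1 - (((x j : ℝ):ℂ) + ((y j : ℝ):ℂ)*I) * (((x j : ℝ):ℂ) - ((y j : ℝ):ℂ)*I)) / 4 := by
      push_cast
      linear_combination (-((y j : ℝ):ℂ)^2/4) * Complex.I_sq
    rw [hcast]
    exact alg_main (deriv F (Complex.exp (I * ((ξ j : ℝ):ℂ)) * (v + (((x j : ℝ):ℂ) + ((y j : ℝ):ℂ)*I))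
        / (1 + (((x j : ℝ):ℂ) - ((y j : ℝ):ℂ)*I)*v)))
      (deriv (deriv F) (Complex.exp (I * ((ξ j : ℝ):ℂ)) * (v + (((x j : ℝ):ℂ) + ((y j : ℝ):ℂ)*I))
        / (1 + (((x j : ℝ):ℂ) - ((y j : ℝ):ℂ)*I)*v)))
      (Complex.exp (I * ((ξ j : ℝ):ℂ))) v ((x j : ℝ):ℂ) ((y j : ℝ):ℂ)
      (1 + (((x j : ℝ):ℂ) - ((y j : ℝ):ℂ)*I)*v) rfl hD
  · -- case ¬ (j+1 < n) : v = 0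
    have hv0 : v = 0 := by
      rw [hvdef]
      have hnil : L.drop ((j:ℕ)+1) = [] := by
        apply List.drop_eq_nil_of_le
        rw [hLdef]
        simp
        omega
      rw [hnil]
      rfl
    rw [alg_xy (deriv F (Complex.exp (I * ((ξ j : ℝ):ℂ)) * (v + (((x j : ℝ):ℂ) + ((y j : ℝ):ℂ)*I))
        / (1 + (((x j : ℝ):ℂ) - ((y j : ℝ):ℂ)*I)*v)))
      (deriv (deriv F) (Complex.exp (I * ((ξ j : ℝ):ℂ)) * (v + (((x j : ℝ):ℂ) + ((y j : ℝ):ℂ)*I))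
        / (1 + (((x j : ℝ):ℂ) - ((y j : ℝ):ℂ)*I)*v)))
      (Complex.exp (I * ((ξ j : ℝ):ℂ))) v ((x j : ℝ):ℂ) ((y j : ℝ):ℂ)
      (1 + (((x j : ℝ):ℂ) - ((y j : ℝ):ℂ)*I)*v), hv0]
    ring
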